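/- arXiv:2105.13647 — 2 statements merged into one kernel-verified Lean document; each statement's English description precedes it below -/
import Mathlib

section
/- Let H = Σ_{m=0}^{L−1} α_m u_m v_mᴴ where u_0, …, u_{L−1} are orthonormal in ℂ^N, v_0, …, v_{L−1} are orthonormal in ℂ^M, α_m ∈ ℂ, and |α_0| ≥ |α_m| for all m. Suppose every entry of v_0 has modulus 1/√M, and let a ∈ ℂ^M be a vector every entry of which has modulus 1/√M. Define v ∈ ℂ^M by v_i = M · conj(a_i) · [v_0]_i and Φ = diag(v). Then every diagonal entry of Φ has unit modulus, and ‖H Φ a‖₂² = |α_0|², which equals the largest eigenvalue of Hᴴ H. -/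
open Matrix Complex ComplexOrder


lemma ortho_dot' {L N : ℕ} {u : Fin L → Fin N → ℂ}
    (hu : ∀ m m', ∑ i, (starRingEnd ℂ) (u m i) * u m' i = if m = m' then 1 else 0)
    (c d : Fin L → ℂ) :
    ∑ i, (starRingEnd ℂ) (∑ m, c m * u m i) * (∑ m, d m * u m i)
      = ∑ m, (starRingEnd ℂ) (c m) * d m := by
  have key : ∀ i, (starRingEnd ℂ) (∑ m, c m * u m i) * (∑ m, d m * u m i)
      = ∑ m, ∑ m', ((starRingEnd ℂ) (c m) * d m') * ((starRingEnd ℂ) (u m i) * u m' i) := by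
    intro i
    rw [map_sum, Finset.sum_mul_sum]
    refine Finset.sum_congr rfl fun m _ => Finset.sum_congr rfl fun m' _ => ?_
    rw [_root_.map_mul]; ring
  simp only [key]
  rw [Finset.sum_comm]
  refine Finset.sum_congr rfl fun m _ => ?_
  rw [Finset.sum_comm]
  have : ∀ m', ∑ i, ((starRingEnd ℂ) (c m) * d m') * ((starRingEnd ℂ) (u m i) * u m' i)
      = ((starRingEnd ℂ) (c m) * d m') * (if m = m' then 1 else 0) := by
    intro m'; rw [← Finset.mul_sum, hu]
  simp only [this, mul_ite, mul_one, mul_zero, Finset.sum_ite_eq, Finset.mem_univ, if_true]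

lemma rankSum_mulVec {N M L : ℕ} (u : Fin L → Fin N → ℂ) (v : Fin L → Fin M → ℂ)
    (α : Fin L → ℂ) (x : Fin M → ℂ) :
    (∑ m, α m • Matrix.vecMulVec (u m) (star (v m))).mulVec x
      = fun i => ∑ m, (α m * ∑ j, (starRingEnd ℂ) (v m j) * x j) * u m i := by
  funext i
  simp only [mulVec, dotProduct, Matrix.sum_apply, Matrix.smul_apply, vecMulVec_apply,
    Pi.star_apply, smul_eq_mul, Finset.sum_mul, Finset.mul_sum]
  rw [Finset.sum_comm]
  refine Finset.sum_congr rfl fun m _ => Finset.sum_congr rfl fun j _ => ?_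
  simp [RCLike.star_def]
  ring

/-- **orthonormal counterpart of Proposition 1.**
Let `H = Σ_m α_m u_m v_mᴴ` with `(u_m)` orthonormal in `ℂ^N`, `(v_m)` orthonormal in `ℂ^M`,
and `|α_0| ≥ |α_m|` for all `m`. If all the entries of `v_0` and of `a ∈ ℂ^M` have modulus
`1/√M`, and `Φ = diag(w)` with `w_i = M conj(a_i) [v_0]_i`, then every diagonal entry of `Φ`
has unit modulus and `‖H Φ a‖₂² = |α_0|²`, which equals the largest eigenvalue of `Hᴴ H`. -/
theorem stmt3 {N M L : ℕ} (hL : 0 < L) (hM : 0 < M)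
    (u : Fin L → Fin N → ℂ) (v : Fin L → Fin M → ℂ) (α : Fin L → ℂ)
    (hu : ∀ m m', ∑ i, (starRingEnd ℂ) (u m i) * u m' i = if m = m' then 1 else 0)
    (hv : ∀ m m', ∑ i, (starRingEnd ℂ) (v m i) * v m' i = if m = m' then 1 else 0)
    (hα : ∀ m, ‖α m‖ ≤ ‖α ⟨0, hL⟩‖)
    (hv0 : ∀ i, ‖v ⟨0, hL⟩ i‖ = 1 / Real.sqrt M)
    (a : Fin M → ℂ) (ha : ∀ i, ‖a i‖ = 1 / Real.sqrt M)
    (H : Matrix (Fin N) (Fin M) ℂ)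
    (hH : H = ∑ m, α m • Matrix.vecMulVec (u m) (star (v m)))
    (w : Fin M → ℂ) (hw : ∀ i, w i = (M : ℂ) * (starRingEnd ℂ) (a i) * v ⟨0, hL⟩ i)
    (Φ : Matrix (Fin M) (Fin M) ℂ) (hΦ : Φ = Matrix.diagonal w) :
    (∀ i, ‖Φ i i‖ = 1) ∧
    (∑ i, ‖(H * Φ).mulVec a i‖ ^ 2 = ‖α ⟨0, hL⟩‖ ^ 2) ∧
    (‖α ⟨0, hL⟩‖ ^ 2
      = ⨆ i, (Matrix.posSemidef_conjTranspose_mul_self H).isHermitian.eigenvalues i) := by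
  haveI : Nonempty (Fin M) := ⟨⟨0, hM⟩⟩
  set z : Fin L := ⟨0, hL⟩ with hz
  have hM0 : (0:ℝ) < (M:ℝ) := by exact_mod_cast hM
  have hsq : Real.sqrt M * Real.sqrt M = M := Real.mul_self_sqrt hM0.le
  have hMne : (M:ℂ) ≠ 0 := by exact_mod_cast hM.ne'
  -- part 1
  have part1 : ∀ i, ‖Φ i i‖ = 1 := by
    intro i
    rw [hΦ, Matrix.diagonal_apply_eq, hw]
    rw [norm_mul, norm_mul, Complex.norm_conj, ha, hv0, Complex.norm_natCast]
    field_simp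
    exact (Real.sq_sqrt hM0.le).symm
  -- Φ *ᵥ a = v z
  have hΦa : Φ.mulVec a = v z := by
    funext i
    rw [hΦ, Matrix.mulVec_diagonal, hw]
    have : (starRingEnd ℂ) (a i) * a i = ((1:ℝ)/M : ℝ) := by
      rw [Complex.conj_mul']
      norm_cast
      rw [ha i, div_pow, one_pow, Real.sq_sqrt hM0.le]
    calc (M:ℂ) * (starRingEnd ℂ) (a i) * v z i * a i
        = (M:ℂ) * ((starRingEnd ℂ) (a i) * a i) * v z i := by ring
      _ = v z i := by rw [this]; push_cast; field_simp
  -- H *ᵥ v z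
  have hHvz : H.mulVec (v z) = fun i => α z * u z i := by
    rw [hH, rankSum_mulVec]
    funext i
    have : ∀ m : Fin L, (α m * ∑ j, (starRingEnd ℂ) (v m j) * v z j) * u m i
        = (if m = z then α z * u z i else 0) := by
      intro m
      rw [hv m z]
      by_cases h : m = z <;> simp [h]
    simp only [this, Finset.sum_ite_eq', Finset.mem_univ, if_true]
  have sumNormSq : ∀ {k : ℕ} (y : Fin k → ℂ),
      ∑ i, ‖y i‖ ^ 2 = (∑ i, (starRingEnd ℂ) (y i) * y i).re := by
    intro k y
    rw [Complex.re_sum]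
    refine Finset.sum_congr rfl fun i _ => ?_
    rw [Complex.conj_mul']
    norm_cast
  -- part 2
  have part2 : ∑ i, ‖(H * Φ).mulVec a i‖ ^ 2 = ‖α z‖ ^ 2 := by
    rw [← Matrix.mulVec_mulVec, hΦa, hHvz]
    rw [sumNormSq]
    have hz2 : ∑ i, (starRingEnd ℂ) (α z * u z i) * (α z * u z i)
        = (starRingEnd ℂ) (α z) * α z := by
      have := ortho_dot' hu (fun m => if m = z then α z else 0) (fun m => if m = z then α z else 0)
      simp only [ite_mul, zero_mul, Finset.sum_ite_eq, Finset.mem_univ, if_true,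
        apply_ite (starRingEnd ℂ), map_zero] at this
      simpa using this
    rw [hz2, Complex.conj_mul']
    norm_cast
  refine ⟨part1, part2, ?_⟩
  -- part 3
  have hA := (Matrix.posSemidef_conjTranspose_mul_self H).isHermitian
  -- conjugate transpose of H
  have hHT : Hᴴ = ∑ m, (starRingEnd ℂ) (α m) • Matrix.vecMulVec (v m) (star (u m)) := by
    rw [hH, Matrix.conjTranspose_sum]
    refine Finset.sum_congr rfl fun m _ => ?_
    ext i j
    simp [Matrix.conjTranspose_apply, Matrix.vecMulVec_apply, RCLike.star_def, mul_comm]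
  -- A *ᵥ v z = μ • v z
  have hAvz : (Hᴴ * H).mulVec (v z)
      = ((‖α z‖ ^ 2 : ℝ) : ℂ) • v z := by
    rw [← Matrix.mulVec_mulVec, hHvz, hHT]
    have : (fun i => α z * u z i) = fun i => ∑ m, (if m = z then α z else 0) * u m i := by
      funext i
      simp [Finset.sum_ite_eq', ite_mul]
    rw [this, rankSum_mulVec]
    funext i
    have hc : ∀ m : Fin L, ((starRingEnd ℂ) (α m)
        * ∑ j, (starRingEnd ℂ) (u m j) * (∑ m', (if m' = z then α z else 0) * u m' j)) * v m i
        = (if m = z then ((starRingEnd ℂ) (α z) * α z) * v z i else 0) := by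
      intro m
      have : ∑ j, (starRingEnd ℂ) (u m j) * (∑ m', (if m' = z then α z else 0) * u m' j)
          = α z * (if m = z then 1 else 0) := by
        have h1 : ∀ j, (∑ m', (if m' = z then α z else 0) * u m' j) = α z * u z j := by
          intro j; simp [ite_mul, Finset.sum_ite_eq']
        simp only [h1]
        have h2 : ∑ j, (starRingEnd ℂ) (u m j) * (α z * u z j)
            = α z * ∑ j, (starRingEnd ℂ) (u m j) * u z j := by
          rw [Finset.mul_sum]; exact Finset.sum_congr rfl fun j _ => by ring
        rw [h2, hu m z]
      rw [this]
      by_cases h : m = z <;> simp [h] <;> ring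
    simp only [hc, Finset.sum_ite_eq', Finset.mem_univ, if_true, Pi.smul_apply, smul_eq_mul]
    rw [Complex.conj_mul']
    norm_cast
  -- the value is an eigenvalue
  have hvz_ne : ((WithLp.equiv 2 (Fin M → ℂ)).symm (v z)) ≠ 0 := by
    intro h
    have h0 : v z ⟨0, hM⟩ = 0 := congrFun (congrArg (WithLp.equiv 2 (Fin M → ℂ)) h) ⟨0, hM⟩
    have := hv0 ⟨0, hM⟩
    rw [h0, norm_zero] at this
    have : Real.sqrt M ≠ 0 := Real.sqrt_ne_zero'.2 hM0
    field_simp at *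
    simp at this
  have hmem : (‖α z‖ ^ 2 : ℝ) ∈ spectrum ℝ (Hᴴ * H) := by
    apply spectrum.of_algebraMap_mem ℂ
    rw [← Matrix.spectrum_toEuclideanLin (A := Hᴴ * H)]
    refine Module.End.HasEigenvalue.mem_spectrum
      (Module.End.hasEigenvalue_of_hasEigenvector (x := (WithLp.equiv 2 (Fin M → ℂ)).symm (v z)) ⟨?_, hvz_ne⟩)
    rw [Module.End.mem_eigenspace_iff, WithLp.equiv_symm_apply, Matrix.toEuclideanLin_apply_piLp_toLp, hAvz]
    rfl
  obtain ⟨i0, hi0⟩ := (hA.spectrum_real_eq_range_eigenvalues ▸ hmem : _)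
  -- upper bound on eigenvalues
  have upper : ∀ i, hA.eigenvalues i ≤ ‖α z‖ ^ 2 := by
    intro i
    rw [Matrix.IsHermitian.eigenvalues_eq]
    set x : Fin M → ℂ := ⇑(hA.eigenvectorBasis i) with hx
    have hxnorm : ‖hA.eigenvectorBasis i‖ = 1 := hA.eigenvectorBasis.orthonormal.1 i
    rw [← Matrix.mulVec_mulVec, Matrix.dotProduct_mulVec, ← Matrix.star_mulVec]
    rw [hH, rankSum_mulVec]
    set c : Fin L → ℂ := fun m => α m * ∑ j, (starRingEnd ℂ) (v m j) * x j with hc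
    have hdot : (star (fun i => ∑ m, c m * u m i) : Fin N → ℂ) ⬝ᵥ (fun i => ∑ m, c m * u m i)
        = ∑ m, (starRingEnd ℂ) (c m) * c m := by
      simpa [dotProduct, Pi.star_apply, RCLike.star_def] using ortho_dot' hu c c
    rw [hdot]
    have hre : RCLike.re (∑ m, (starRingEnd ℂ) (c m) * c m) = ∑ m, ‖c m‖ ^ 2 :=
      (sumNormSq c).symm
    rw [hre]
    have hVortho : Orthonormal ℂ (fun m => (WithLp.equiv 2 (Fin M → ℂ)).symm (v m)) := by
      rw [orthonormal_iff_ite]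
      intro m m'
      simpa [PiLp.inner_apply, RCLike.inner_apply, mul_comm] using hv m m'
    have hBessel : ∑ m, ‖∑ j, (starRingEnd ℂ) (v m j) * x j‖ ^ 2 ≤ 1 := by
      have hb := hVortho.sum_inner_products_le (s := Finset.univ) (hA.eigenvectorBasis i)
      rw [hxnorm, one_pow] at hb
      simpa [PiLp.inner_apply, RCLike.inner_apply, hx, mul_comm] using hb
    calc ∑ m, ‖c m‖ ^ 2
        = ∑ m, ‖α m‖ ^ 2 * ‖∑ j, (starRingEnd ℂ) (v m j) * x j‖ ^ 2 := by
          simp [hc, norm_mul, mul_pow]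
      _ ≤ ∑ m, ‖α z‖ ^ 2 * ‖∑ j, (starRingEnd ℂ) (v m j) * x j‖ ^ 2 := by
          refine Finset.sum_le_sum fun m _ => ?_
          exact mul_le_mul_of_nonneg_right
            (pow_le_pow_left₀ (norm_nonneg _) (hα m) 2) (by positivity)
      _ = ‖α z‖ ^ 2 * ∑ m, ‖∑ j, (starRingEnd ℂ) (v m j) * x j‖ ^ 2 := by
          rw [Finset.mul_sum]
      _ ≤ ‖α z‖ ^ 2 * 1 := by
          exact mul_le_mul_of_nonneg_left hBessel (by positivity)
      _ = ‖α z‖ ^ 2 := mul_one _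
  refine le_antisymm ?_ (ciSup_le upper)
  exact hi0 ▸ le_ciSup (Set.Finite.bddAbove (Set.finite_range _)) i0
end

section
/- Let B ∈ ℂ^{n×n} be Hermitian positive semidefinite and let W ∈ ℂ^{n×k} satisfy Wᴴ W = I_k. Then det(I_k + Wᴴ B W) ≤ det(I_n + B). -/
open Matrix ComplexOrder
open scoped MatrixOrder

/-- For a positive semidefinite `D`, `1 ≤ det (1 + D)` in the complex order. -/
lemma aux_one_le_det_one_add {m : ℕ} {D : Matrix (Fin m) (Fin m) ℂ} (hD : D.PosSemidef) :
    (1 : ℂ) ≤ ((1 : Matrix (Fin m) (Fin m) ℂ) + D).det := by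
  have hH := hD.isHermitian
  set U := (Matrix.IsHermitian.eigenvectorUnitary hH : Matrix (Fin m) (Fin m) ℂ) with hUdef
  have hUU : U * star U = 1 := (Matrix.mem_unitaryGroup_iff).mp
    (Matrix.IsHermitian.eigenvectorUnitary hH).2
  have hspec := hH.spectral_theorem
  rw [Unitary.conjStarAlgAut_apply] at hspec
  have key : (1 : Matrix (Fin m) (Fin m) ℂ) + D
      = U * ((1 : Matrix (Fin m) (Fin m) ℂ) + diagonal (RCLike.ofReal ∘ hH.eigenvalues)) * star U := by
    rw [Matrix.mul_add, Matrix.add_mul, Matrix.mul_one, hUU, hUdef, ← hspec]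
  rw [key]
  have hdiag : ((1 : Matrix (Fin m) (Fin m) ℂ)
      + diagonal (RCLike.ofReal ∘ hH.eigenvalues)).det
      = ∏ i, (1 + (hH.eigenvalues i : ℂ)) := by
    rw [← Matrix.diagonal_one, Matrix.diagonal_add, Matrix.det_diagonal]
    simp [Function.comp]
  have hUdet : U.det * (star U).det = 1 := by
    rw [← Matrix.det_mul, hUU, Matrix.det_one]
  rw [Matrix.det_mul, Matrix.det_mul, hdiag, mul_comm (U.det), mul_assoc, hUdet, mul_one]
  calc (1 : ℂ) = ∏ _i : Fin m, (1 : ℂ) := by simp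
    _ ≤ ∏ i, (1 + (hH.eigenvalues i : ℂ)) := by
        apply Finset.prod_le_prod
        · intro i _; exact zero_le_one
        · intro i _
          have := hD.eigenvalues_nonneg i
          have h0 : (0 : ℂ) ≤ (hH.eigenvalues i : ℂ) := by
            rw [Complex.zero_le_real]; exact this
          exact le_add_of_nonneg_right h0

/-- Monotonicity of `det (1 + ·)` along adding a positive semidefinite matrix. -/
lemma aux_det_one_add_le {m : ℕ} {X D : Matrix (Fin m) (Fin m) ℂ}
    (hX : X.PosSemidef) (hD : D.PosSemidef) :
    ((1 : Matrix (Fin m) (Fin m) ℂ) + X).det ≤ ((1 : Matrix (Fin m) (Fin m) ℂ) + X + D).det := by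
  have hP : ((1 : Matrix (Fin m) (Fin m) ℂ) + X).PosDef :=
    Matrix.PosDef.add_posSemidef Matrix.PosDef.one hX
  set S := CFC.sqrt ((1 : Matrix (Fin m) (Fin m) ℂ) + X) with hSdef
  have hSps : S.PosSemidef := Matrix.nonneg_iff_posSemidef.mp (CFC.sqrt_nonneg _)
  have hSS : S * S = 1 + X := CFC.sqrt_mul_sqrt_self _ (Matrix.nonneg_iff_posSemidef.mpr hP.posSemidef)
  have hdetS : S.det * S.det = (1 + X).det := by rw [← Matrix.det_mul, hSS]
  have hdetSne : S.det ≠ 0 := by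
    intro h
    have := hP.det_pos
    rw [← hdetS, h, mul_zero] at this
    exact lt_irrefl _ this
  have hSinv : S * S⁻¹ = 1 := Matrix.mul_nonsing_inv S (by simpa using hdetSne)
  have hSinv' : S⁻¹ * S = 1 := Matrix.nonsing_inv_mul S (by simpa using hdetSne)
  have hSinvH : (S⁻¹)ᴴ = S⁻¹ := by
    rw [Matrix.conjTranspose_nonsing_inv, hSps.isHermitian.eq]
  have hE : (S⁻¹ * D * S⁻¹).PosSemidef := by
    have := hD.mul_mul_conjTranspose_same (S⁻¹)
    rwa [hSinvH] at this
  have key : (1 : Matrix (Fin m) (Fin m) ℂ) + X + D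
      = S * ((1 : Matrix (Fin m) (Fin m) ℂ) + S⁻¹ * D * S⁻¹) * S := by
    rw [Matrix.mul_add, Matrix.mul_one, Matrix.add_mul, hSS]
    congr 1
    have : S * (S⁻¹ * D * S⁻¹) * S = (S * S⁻¹) * D * (S⁻¹ * S) := by
      simp only [Matrix.mul_assoc]
    rw [this, hSinv, hSinv', Matrix.one_mul, Matrix.mul_one]
  rw [key, Matrix.det_mul, Matrix.det_mul]
  have h1 : (1 : ℂ) ≤ ((1 : Matrix (Fin m) (Fin m) ℂ) + S⁻¹ * D * S⁻¹).det :=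
    aux_one_le_det_one_add hE
  have hdetSnonneg : (0 : ℂ) ≤ S.det := by
    rw [hSps.isHermitian.det_eq_prod_eigenvalues]
    refine Finset.prod_nonneg fun i _ => ?_
    have := hSps.eigenvalues_nonneg i
    simpa [Complex.zero_le_real] using this
  calc ((1 : Matrix (Fin m) (Fin m) ℂ) + X).det
      = S.det * 1 * S.det := by rw [mul_one, hdetS]
    _ ≤ S.det * ((1 : Matrix (Fin m) (Fin m) ℂ) + S⁻¹ * D * S⁻¹).det * S.det := by
        apply mul_le_mul_of_nonneg_right _ hdetSnonneg
        exact mul_le_mul_of_nonneg_left h1 hdetSnonneg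

/-- For a Hermitian positive semidefinite `B ∈ ℂ^{n×n}` and a semi-unitary
`W ∈ ℂ^{n×k}` (i.e. `Wᴴ W = I_k`), we have `det(I_k + Wᴴ B W) ≤ det(I_n + B)` (both
determinants are real, and the inequality is in the complex order). -/
theorem stmt8 {n k : ℕ} (B : Matrix (Fin n) (Fin n) ℂ) (hB : B.PosSemidef)
    (W : Matrix (Fin n) (Fin k) ℂ) (hW : Wᴴ * W = 1) :
    ((1 : Matrix (Fin k) (Fin k) ℂ) + Wᴴ * B * W).det
      ≤ ((1 : Matrix (Fin n) (Fin n) ℂ) + B).det := by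
  set C := CFC.sqrt B with hCdef
  have hCH : Cᴴ = C := (Matrix.nonneg_iff_posSemidef.mp (CFC.sqrt_nonneg B)).isHermitian.eq
  have hCC : C * C = B := CFC.sqrt_mul_sqrt_self B (Matrix.nonneg_iff_posSemidef.mpr hB)
  -- rewrite the left determinant
  have hswap : ((1 : Matrix (Fin k) (Fin k) ℂ) + Wᴴ * B * W).det
      = ((1 : Matrix (Fin n) (Fin n) ℂ) + (C * W) * (Wᴴ * C)).det := by
    rw [← Matrix.det_one_add_mul_comm (Wᴴ * C) (C * W)]
    congr 2
    calc Wᴴ * B * W = Wᴴ * (C * C) * W := by rw [hCC]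
      _ = Wᴴ * C * (C * W) := by simp only [Matrix.mul_assoc]
  set X := (C * W) * (Wᴴ * C) with hXdef
  have hX : X.PosSemidef := by
    have := posSemidef_self_mul_conjTranspose (C * W)
    rwa [Matrix.conjTranspose_mul, hCH] at this
  -- D = C * (1 - W Wᴴ) * C is PSD
  set M := (1 : Matrix (Fin n) (Fin n) ℂ) - W * Wᴴ with hMdef
  have hMps : M.PosSemidef := by
    have hMH : Mᴴ = M := by
      simp [hMdef, Matrix.conjTranspose_sub, Matrix.conjTranspose_mul]
    have hMM : Mᴴ * M = M := by
      rw [hMH, hMdef]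
      have h2 : W * Wᴴ * (W * Wᴴ) = W * Wᴴ := by
        calc W * Wᴴ * (W * Wᴴ) = W * (Wᴴ * W) * Wᴴ := by simp only [Matrix.mul_assoc]
          _ = W * Wᴴ := by rw [hW, Matrix.mul_one]
      simp only [Matrix.sub_mul, Matrix.mul_sub, Matrix.one_mul, Matrix.mul_one, h2]
      abel
    have := posSemidef_conjTranspose_mul_self M
    rwa [hMM] at this
  have hDps : (C * M * C).PosSemidef := by
    have := hMps.mul_mul_conjTranspose_same C
    rwa [hCH] at this
  have hXD : X + C * M * C = B := by
    rw [hXdef, hMdef]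
    rw [Matrix.mul_sub, Matrix.mul_one, Matrix.sub_mul]
    have h1 : C * W * (Wᴴ * C) = C * (W * Wᴴ) * C := by simp only [Matrix.mul_assoc]
    rw [h1, hCC]
    abel
  have := aux_det_one_add_le hX hDps
  rw [hswap]
  calc ((1 : Matrix (Fin n) (Fin n) ℂ) + X).det
      ≤ ((1 : Matrix (Fin n) (Fin n) ℂ) + X + C * M * C).det := this
    _ = ((1 : Matrix (Fin n) (Fin n) ℂ) + B).det := by rw [add_assoc, hXD]
end
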